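/- Suppose (X_n) is an adapted real-valued process with X_{n+1} ≥ X_n a.s., X_n ≤ f* a.s., and there exist γ > 0 and η ∈ (0, 1] such that for every n, on the event {X_n ≤ f* − ε}, P(X_{n+1} − X_n ≥ γ | ℱ_n) ≥ η. Then P(X_n > f* − ε) → 1 as n → ∞. -/

import Mathlib

open MeasureTheory Filter

/-- If a set `C` is measurable w.r.t. a sub-σ-algebra `m` and on `C` the conditional
probability of `G` is at least `η`, then `μ (C ∩ G) ≥ η * μ C`. -/
lemma drift_step_bound {Ω : Type*} {m : MeasurableSpace Ω} {m0 : MeasurableSpace Ω}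
    (hm : m ≤ m0) (μ : Measure Ω) [IsProbabilityMeasure μ]
    {G C : Set Ω} (hG : MeasurableSet[m0] G) (hC : MeasurableSet[m] C) {η : ℝ}
    (h : ∀ᵐ ω ∂μ, ω ∈ C → η ≤ (μ[Set.indicator G (fun _ => (1 : ℝ)) | m]) ω) :
    η * (μ (C ∩ G)).toReal + η * (μ (C \ G)).toReal ≤ (μ (C ∩ G)).toReal := by
  have hCm0 : MeasurableSet C := hm _ hC
  have hint : Integrable (Set.indicator G (fun _ => (1 : ℝ))) μ :=
    (integrable_const (1 : ℝ)).indicator hG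
  have h1 : ∫ ω in C, (μ[Set.indicator G (fun _ => (1 : ℝ)) | m]) ω ∂μ
      = ∫ ω in C, Set.indicator G (fun _ => (1 : ℝ)) ω ∂μ :=
    setIntegral_condExp hm hint hC
  have h2 : ∫ ω in C, Set.indicator G (fun _ => (1 : ℝ)) ω ∂μ = (μ (C ∩ G)).toReal := by
    rw [show (∫ ω in C, Set.indicator G (fun _ => (1 : ℝ)) ω ∂μ)
        = ∫ ω, Set.indicator G (fun _ => (1 : ℝ)) ω ∂(μ.restrict C) from rfl,
      integral_indicator hG, setIntegral_const, measureReal_def, Measure.restrict_apply hG, Set.inter_comm]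
    simp
  have h3 : η * (μ C).toReal ≤ ∫ ω in C, (μ[Set.indicator G (fun _ => (1 : ℝ)) | m]) ω ∂μ := by
    have hconst : ∫ _ in C, η ∂μ = (μ C).toReal * η := by
      rw [setIntegral_const]; simp [smul_eq_mul, measureReal_def]
    rw [mul_comm, ← hconst]
    exact setIntegral_mono_on_ae (integrableOn_const (measure_ne_top μ C))
      integrable_condExp.integrableOn hCm0 h
  have hsplit : (μ (C ∩ G)).toReal + (μ (C \ G)).toReal = (μ C).toReal := by
    rw [← ENNReal.toReal_add (measure_ne_top μ _) (measure_ne_top μ _),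
      measure_inter_add_diff C hG]
  rw [h1, h2] at h3
  rw [← hsplit] at h3
  nlinarith [h3]

/-- Abstract drift lemma (Theorem 1): an adapted, a.s. non-decreasing process bounded
above by `fstar`, which on the event `{X n ≤ fstar - ε}` has conditional probability at
least `η` of improving by at least `γ`, eventually lies in the ε-convergence region
with probability tending to one. -/
theorem drift_convergence_in_probability
    {Ω : Type*} {m0 : MeasurableSpace Ω} (μ : Measure Ω) [IsProbabilityMeasure μ]
    (ℱ : Filtration ℕ m0) (X : ℕ → Ω → ℝ) (hadap : Adapted ℱ X)
    (fstar ε γ η : ℝ) (hε : 0 < ε) (hγ : 0 < γ) (hη : 0 < η) (hη1 : η ≤ 1)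
    (hmono : ∀ n, ∀ᵐ ω ∂μ, X n ω ≤ X (n + 1) ω)
    (hbdd : ∀ n, ∀ᵐ ω ∂μ, X n ω ≤ fstar)
    (hdrift : ∀ n, ∀ᵐ ω ∂μ, X n ω ≤ fstar - ε →
      η ≤ (μ[Set.indicator {ω' | γ ≤ X (n + 1) ω' - X n ω'} (fun _ => (1 : ℝ)) | ℱ n]) ω) :
    Tendsto (fun n => (μ {ω | fstar - ε < X n ω}).toReal) atTop (nhds 1) := by
  -- notation
  set A : ℕ → Set Ω := fun n => {ω | X n ω ≤ fstar - ε} with hA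
  set G : ℕ → Set Ω := fun n => {ω | γ ≤ X (n + 1) ω - X n ω} with hGdef
  have hAm : ∀ n, MeasurableSet[ℱ n] (A n) := fun n =>
    measurableSet_le (hadap n) measurable_const
  have hAmeas : ∀ n, MeasurableSet (A n) := fun n => ℱ.le n _ (hAm n)
  have hGm : ∀ n, MeasurableSet[ℱ (n + 1)] (G n) := fun n =>
    measurableSet_le measurable_const
      ((hadap (n + 1)).sub ((hadap n).mono (ℱ.mono n.le_succ) le_rfl))
  have hGmeas : ∀ n, MeasurableSet (G n) := fun n => ℱ.le (n + 1) _ (hGm n)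
  -- the "no progress" sets
  set C : ℕ → ℕ → Set Ω := fun N m => A (N + m) ∩ ⋂ k ∈ {k : ℕ | k < m}, (G (N + k))ᶜ with hCdef
  have hCm : ∀ N m, MeasurableSet[ℱ (N + m)] (C N m) := by
    intro N m
    refine (hAm (N + m)).inter (MeasurableSet.biInter (Set.to_countable _) fun k hk => ?_)
    have hk' : k < m := hk
    exact ℱ.mono (by omega : N + k + 1 ≤ N + m) _ (hGm (N + k)).compl
  have hCmeas : ∀ N m, MeasurableSet (C N m) := fun N m => ℱ.le (N + m) _ (hCm N m)
  -- the key one-step estimate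
  have key : ∀ N m, (μ (C N (m + 1))).toReal ≤ (1 - η) * (μ (C N m)).toReal := by
    intro N m
    have hsub : ∀ᵐ ω ∂μ, ω ∈ C N (m + 1) → ω ∈ C N m \ G (N + m) := by
      filter_upwards [hmono (N + m)] with ω hmo hω
      obtain ⟨h1, h2⟩ := hω
      have h2' : ∀ k < m + 1, ω ∉ G (N + k) := by
        intro k hk
        exact Set.mem_iInter₂.mp h2 k hk
      refine ⟨⟨?_, Set.mem_iInter₂.mpr fun k hk =>
        h2' k (Nat.lt_succ_of_lt hk)⟩, h2' m (Nat.lt_succ_self m)⟩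
      exact le_trans (show X (N + m) ω ≤ X (N + m + 1) ω from hmo) h1
    have hle1 : μ (C N (m + 1)) ≤ μ (C N m \ G (N + m)) := by
      refine measure_mono_ae ?_
      filter_upwards [hsub] with ω h using h
    have hkey := drift_step_bound (ℱ.le (N + m)) μ (hGmeas (N + m)) (hCm N m)
      (η := η) ?_
    · have hsplit : (μ (C N m ∩ G (N + m))).toReal + (μ (C N m \ G (N + m))).toReal
          = (μ (C N m)).toReal := by
        rw [← ENNReal.toReal_add (measure_ne_top μ _) (measure_ne_top μ _),
          measure_inter_add_diff _ (hGmeas (N + m))]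
      have hle2 : (μ (C N (m + 1))).toReal ≤ (μ (C N m \ G (N + m))).toReal :=
        ENNReal.toReal_mono (measure_ne_top μ _) hle1
      nlinarith
    · filter_upwards [hdrift (N + m)] with ω hd hω
      exact hd hω.1
  -- hence a geometric bound
  have bound : ∀ N m, (μ (C N m)).toReal ≤ (1 - η) ^ m := by
    intro N m
    induction m with
    | zero =>
      have h1 : μ (C N 0) ≤ 1 := prob_le_one
      have := ENNReal.toReal_mono ENNReal.one_ne_top h1
      simpa using this
    | succ m ih =>
      calc (μ (C N (m + 1))).toReal ≤ (1 - η) * (μ (C N m)).toReal := key N m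
        _ ≤ (1 - η) * (1 - η) ^ m := by
            have h0 : (0 : ℝ) ≤ 1 - η := by linarith
            exact mul_le_mul_of_nonneg_left ih h0
        _ = (1 - η) ^ (m + 1) := (pow_succ' _ _).symm
  -- so each ⋂ m, C N m is null
  have hzero : ∀ N, μ (⋂ m, C N m) = 0 := by
    intro N
    have hle : ∀ m, (μ (⋂ m, C N m)).toReal ≤ (1 - η) ^ m := fun m =>
      le_trans (ENNReal.toReal_mono (measure_ne_top μ _)
        (measure_mono (Set.iInter_subset _ m))) (bound N m)
    have hpow : Tendsto (fun m : ℕ => (1 - η) ^ m) atTop (nhds 0) := by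
      apply tendsto_pow_atTop_nhds_zero_of_abs_lt_one
      rw [abs_lt]; constructor <;> linarith
    have h0 : (μ (⋂ m, C N m)).toReal ≤ 0 := ge_of_tendsto hpow (Eventually.of_forall hle)
    have h0' : (μ (⋂ m, C N m)).toReal = 0 := le_antisymm h0 ENNReal.toReal_nonneg
    exact (ENNReal.toReal_eq_zero_iff _).mp h0' |>.resolve_right (measure_ne_top μ _)
  -- the limit bad set is null
  have hS : μ (⋂ n, A n) = 0 := by
    have hsub : ∀ᵐ ω ∂μ, ω ∈ ⋂ n, A n → ω ∈ ⋃ N, ⋂ m, C N m := by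
      filter_upwards [ae_all_iff.mpr hmono, ae_all_iff.mpr hbdd] with ω hmo hbd hω
      have hmonog : Monotone fun n => X n ω := monotone_nat_of_le_succ hmo
      have hconv : Tendsto (fun n => X n ω) atTop (nhds (⨆ n, X n ω)) :=
        tendsto_atTop_ciSup hmonog ⟨fstar, fun x ⟨n, hn⟩ => hn ▸ hbd n⟩
    -- increments tend to 0, hence eventually below γ
      have hdiff : Tendsto (fun n => X (n + 1) ω - X n ω) atTop (nhds 0) := by
        have := (hconv.comp (tendsto_add_atTop_nat 1)).sub hconv
        simpa using this
      obtain ⟨N, hN⟩ := eventually_atTop.mp (hdiff.eventually_lt_const hγ)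
      refine Set.mem_iUnion.mpr ⟨N, Set.mem_iInter.mpr fun m => ⟨?_, ?_⟩⟩
      · exact Set.mem_iInter.mp hω (N + m)
      · exact Set.mem_iInter₂.mpr fun k hk hgain =>
          absurd hgain (not_le.mpr (hN (N + k) (Nat.le_add_right _ _)))
    have h1 : μ (⋂ n, A n) ≤ μ (⋃ N, ⋂ m, C N m) := by
      refine measure_mono_ae ?_
      filter_upwards [hsub] with ω h using h
    have h2 : μ (⋃ N, ⋂ m, C N m) = 0 :=
      le_antisymm (le_trans (measure_iUnion_le _) (by simp [hzero])) zero_le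
    exact le_antisymm (h2 ▸ h1) zero_le
  -- A n has the same measure as the decreasing sets D n
  set D : ℕ → Set Ω := fun n => ⋂ k ∈ {k : ℕ | k ≤ n}, A k with hDdef
  have hDmeas : ∀ n, MeasurableSet (D n) :=
    fun n => MeasurableSet.biInter (Set.to_countable _) fun k _ => hAmeas k
  have hDanti : Antitone D := by
    intro a b hab
    exact Set.iInter₂_mono' fun k hk => ⟨k, le_trans hk hab, le_rfl⟩
  have hDeq : ∀ n, μ (A n) = μ (D n) := by
    intro n
    refine le_antisymm ?_ (measure_mono fun ω hω => Set.mem_iInter₂.mp hω n (by simp : n ∈ {k | k ≤ n}))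
    refine measure_mono_ae ?_
    filter_upwards [ae_all_iff.mpr hmono] with ω hmo hω
    have hmonog : Monotone fun n => X n ω := monotone_nat_of_le_succ hmo
    exact Set.mem_iInter₂.mpr fun k hk => le_trans (hmonog hk) hω
  have hDinter : (⋂ n, D n) = ⋂ n, A n := by
    apply le_antisymm
    · exact fun ω hω => Set.mem_iInter.mpr fun n =>
        Set.mem_iInter₂.mp (Set.mem_iInter.mp hω n) n (by simp : n ∈ {k | k ≤ n})
    · exact fun ω hω => Set.mem_iInter.mpr fun n =>
        Set.mem_iInter₂.mpr fun k _ => Set.mem_iInter.mp hω k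
  have hDlim : Tendsto (fun n => μ (D n)) atTop (nhds 0) := by
    have := tendsto_measure_iInter_atTop (μ := μ) (s := D)
      (fun n => (hDmeas n).nullMeasurableSet) hDanti ⟨0, measure_ne_top μ _⟩
    rw [hDinter, hS] at this
    exact this
  have hAlim : Tendsto (fun n => (μ (A n)).toReal) atTop (nhds 0) := by
    have htoReal : Tendsto (fun n => (μ (D n)).toReal) atTop (nhds 0) := by
      have := (ENNReal.tendsto_toReal (by simp : (0 : ENNReal) ≠ ⊤)).comp hDlim
      simpa [Function.comp_def] using this
    simpa [fun n => hDeq n] using htoReal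
  -- conclude
  have hcompl : ∀ n, {ω | fstar - ε < X n ω} = (A n)ᶜ := by
    intro n
    ext ω
    simp [hA, not_le]
  have hval : ∀ n, (μ {ω | fstar - ε < X n ω}).toReal = 1 - (μ (A n)).toReal := by
    intro n
    rw [hcompl n, prob_compl_eq_one_sub (hAmeas n),
      ENNReal.toReal_sub_of_le prob_le_one ENNReal.one_ne_top]
    simp
  simp only [hval]
  simpa using tendsto_const_nhds.sub hAlim
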